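/- arXiv:1905.12326 — 2 statements merged into one kernel-verified Lean document; each statement's English description precedes it below -/
import Mathlib

section
/- Fix β > 0 and a constant p ∈ (0,1]. Then log E[e^{-βH(σ)}] = (1-p)β²/(8p) + (β/(2N))|σ|² + O(1/N²)·(|σ|²/N + 1), where the O(1/N²)-term is uniform over σ ∈ {-1,+1}^N; i.e., there is a constant C such that for all sufficiently large N and all σ ∈ {-1,+1}^N, | log E[e^{-βH(σ)}] - (1-p)β²/(8p) - (β/(2N))|σ|² | ≤ (C/N²)(|σ|²/N + 1). -/
open MeasureTheory ProbabilityTheory Filter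
open scoped Classical

noncomputable section

/-- The spin value `±1` associated to a Boolean. -/
def spin (b : Bool) : ℝ := if b then 1 else -1

/-- The total magnetization `|σ| = σ₁ + ⋯ + σ_N` of a spin configuration. -/
def mag {N : ℕ} (σ : Fin N → Bool) : ℝ := ∑ i, spin (σ i)

/-- The overlap `|στ| = ∑ σᵢτᵢ` of two spin configurations. -/
def magPair {N : ℕ} (σ τ : Fin N → Bool) : ℝ := ∑ i, spin (σ i) * spin (τ i)

/-- The Hamiltonian `H(σ) = -(1/(2Np)) ∑_{i,j} ε_{i,j} σᵢ σⱼ` of the Ising model on the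
directed Erdős–Rényi graph with edge indicators `ε`. -/
def hamil (N : ℕ) (p : ℝ) (ε : Fin N × Fin N → Bool) (σ : Fin N → Bool) : ℝ :=
  -(1 / (2 * N * p)) * ∑ i : Fin N, ∑ j : Fin N,
    (if ε (i, j) then (1 : ℝ) else 0) * spin (σ i) * spin (σ j)

/-- The joint law of the i.i.d. Bernoulli(p) edge indicators `(ε_{i,j})_{i,j=1}^N`. -/
def bern (N : ℕ) (p : ℝ) : Measure (Fin N × Fin N → Bool) :=
  Measure.pi fun _ => (PMF.bernoulli (min 1 (Real.toNNReal p)) (min_le_left _ _)).toMeasure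

/-- The generalized partition function `Z_N(β, g) = ∑_σ e^{-βH(σ)} g(|σ|/√N)`. -/
def ZNg (N : ℕ) (p β : ℝ) (g : ℝ → ℝ) (ε : Fin N × Fin N → Bool) : ℝ :=
  ∑ σ : Fin N → Bool, Real.exp (-β * hamil N p ε σ) * g (mag σ / Real.sqrt N)

/-- The expectation `𝔼 Z_N(β, g)` over the randomness of the graph. -/
def EZNg (N : ℕ) (p β : ℝ) (g : ℝ → ℝ) : ℝ :=
  ∫ ε, ZNg N p β g ε ∂(bern N p)

/-- The Gaussian expectation `𝔼_ξ [g(ξ) e^{β ξ²/2}]` for a standard normal `ξ`. -/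
def gaussExp (β : ℝ) (g : ℝ → ℝ) : ℝ :=
  ∫ x, g x * Real.exp (β * x ^ 2 / 2) ∂(gaussianReal 0 1)

-- |log(1+t) - t| ≤ 2t² for t ≥ -1/2
lemma mylog_bound {t : ℝ} (ht : -(1/2) ≤ t) : |Real.log (1 + t) - t| ≤ 2 * t ^ 2 := by
  have h0 : (0:ℝ) < 1 + t := by linarith
  have hub : Real.log (1 + t) ≤ t := by
    have := Real.log_le_sub_one_of_pos h0; linarith
  have hlb : t / (1 + t) ≤ Real.log (1 + t) := by
    have := Real.one_sub_inv_le_log_of_pos h0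
    have : 1 - (1+t)⁻¹ ≤ Real.log (1+t) := this
    have he : t / (1 + t) = 1 - (1+t)⁻¹ := by field_simp; ring
    linarith [he ▸ this]
  have hkey : t - t / (1 + t) ≤ 2 * t ^ 2 := by
    rw [sub_div' h0.ne']
    rw [div_le_iff₀ h0]
    nlinarith
  rw [abs_le]; constructor <;> nlinarith [sq_nonneg t]

-- cosh bound
lemma mycosh_bound {x : ℝ} (hx : |x| ≤ 1) : |Real.cosh x - 1 - x ^ 2 / 2| ≤ x ^ 4 := by
  have h1 := Real.exp_bound hx (n := 4) (by norm_num)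
  have h2 := Real.exp_bound (x := -x) (by rwa [abs_neg]) (n := 4) (by norm_num)
  simp only [Finset.sum_range_succ, Finset.sum_range_zero] at h1 h2
  rw [Real.cosh_eq]
  rw [abs_neg] at h2
  have h4 : |x| ^ 4 = x ^ 4 := by
    rw [← abs_pow]; exact abs_of_nonneg (by positivity)
  rw [h4] at h1 h2
  norm_num [Nat.factorial] at h1 h2 ⊢
  rw [abs_le] at h1 h2 ⊢
  constructor <;> nlinarith

-- exp 2nd order bound
lemma myexp2_bound {y : ℝ} (hy : |y| ≤ 1) : |Real.exp y - (1 + y + y ^ 2 / 2)| ≤ |y| ^ 3 := by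
  have h1 := Real.exp_bound hy (n := 3) (by norm_num)
  simp only [Finset.sum_range_succ, Finset.sum_range_zero] at h1
  norm_num [Nat.factorial] at h1
  calc |Real.exp y - (1 + y + y ^ 2 / 2)| ≤ |y| ^ 3 * (4/18) := by
        convert h1 using 2; ring
    _ ≤ |y| ^ 3 := by nlinarith [abs_nonneg y, pow_nonneg (abs_nonneg y) 3]

-- core log bound
lemma even_core {q u x : ℝ} (hq0 : 0 ≤ q) (hq2 : q ≤ 1/2) (hu0 : 0 ≤ u)
    (hub : |u - x^2/2| ≤ x^4) (hx2 : x^2 ≤ 1) :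
    |Real.log (1 + q*u) - q * x^2 / 2| ≤ 2 * x ^ 4 := by
  have hx4 : x ^ 4 ≤ x ^ 2 := by nlinarith [sq_nonneg x]
  have hx40 : (0:ℝ) ≤ x ^ 4 := by positivity
  rw [abs_le] at hub
  have ht0 : 0 ≤ q * u := mul_nonneg hq0 hu0
  have htx : q * u ≤ (3/4) * x ^ 2 := by nlinarith
  have ht2 : (q*u) ^ 2 ≤ (9/16) * x ^ 4 := by nlinarith
  have htd : |q * u - q * x ^ 2 / 2| ≤ x ^ 4 / 2 := by
    rw [abs_le]; constructor <;> nlinarith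
  have hlg := mylog_bound (t := q*u) (by linarith)
  rw [abs_le] at hlg htd ⊢
  constructor <;> linarith [hlg.1, hlg.2, htd.1, htd.2]

-- even bound
lemma even_bound {p x : ℝ} (hp : 0 < p) (hp1 : p ≤ 1) (hx : |x| ≤ 1) :
    |Real.log (1 - p + p * Real.exp x) + Real.log (1 - p + p * Real.exp (-x))
      - p * (1 - p) * x ^ 2| ≤ 2 * x ^ 4 := by
  have he : Real.exp x > 0 := Real.exp_pos x
  have he' : Real.exp (-x) > 0 := Real.exp_pos _
  have h1 : (0:ℝ) < 1 - p + p * Real.exp x := by nlinarith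
  have h2 : (0:ℝ) < 1 - p + p * Real.exp (-x) := by nlinarith
  have hxx : Real.exp x * Real.exp (-x) = 1 := by rw [← Real.exp_add]; simp
  have hprod : (1 - p + p * Real.exp x) * (1 - p + p * Real.exp (-x))
      = 1 + (2 * p * (1 - p)) * (Real.cosh x - 1) := by
    rw [Real.cosh_eq]; linear_combination (p^2 : ℝ) * hxx
  have hlog : Real.log (1 - p + p * Real.exp x) + Real.log (1 - p + p * Real.exp (-x))
      = Real.log (1 + (2 * p * (1 - p)) * (Real.cosh x - 1)) := by
    rw [← Real.log_mul h1.ne' h2.ne', hprod]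
  rw [hlog]
  have hx2 : x ^ 2 ≤ 1 := by nlinarith [sq_abs x, abs_nonneg x]
  have h := even_core (q := 2*p*(1-p)) (u := Real.cosh x - 1)
    (by nlinarith) (by nlinarith [sq_nonneg (2*p-1)])
    (by linarith [Real.one_le_cosh x]) (mycosh_bound hx) hx2
  have : 2*p*(1-p) * x^2 / 2 = p * (1-p) * x^2 := by ring
  rw [this] at h
  exact h

-- phi bound
lemma phi_bound {p x : ℝ} (hp : 0 < p) (hp1 : p ≤ 1) (hx : |x| ≤ 1) :
    |((1-p) * Real.exp (-(p*x)) + p * Real.exp ((1-p)*x)) - (1 + p*(1-p)*x^2/2)| ≤ |x|^3 := by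
  have hy1 : |(-(p*x))| ≤ 1 := by
    rw [abs_neg, abs_mul, abs_of_pos hp]
    nlinarith [abs_nonneg x]
  have hy2 : |(1-p)*x| ≤ 1 := by
    rw [abs_mul, abs_of_nonneg (by linarith : (0:ℝ) ≤ 1-p)]
    nlinarith [abs_nonneg x]
  have h1 := myexp2_bound hy1
  have h2 := myexp2_bound hy2
  have e1 : |(-(p*x))|^3 = p^3 * |x|^3 := by
    rw [abs_neg, abs_mul, abs_of_pos hp]; ring
  have e2 : |(1-p)*x|^3 = (1-p)^3 * |x|^3 := by
    rw [abs_mul, abs_of_nonneg (by linarith : (0:ℝ) ≤ 1-p)]; ring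
  rw [e1] at h1; rw [e2] at h2
  have key : ((1-p) * Real.exp (-(p*x)) + p * Real.exp ((1-p)*x)) - (1 + p*(1-p)*x^2/2)
      = (1-p) * (Real.exp (-(p*x)) - (1 + (-(p*x)) + (-(p*x))^2/2))
        + p * (Real.exp ((1-p)*x) - (1 + ((1-p)*x) + ((1-p)*x)^2/2)) := by ring
  rw [key]
  have hm3 : (0:ℝ) ≤ |x|^3 := by positivity
  calc |(1-p) * (Real.exp (-(p*x)) - (1 + (-(p*x)) + (-(p*x))^2/2))
        + p * (Real.exp ((1-p)*x) - (1 + ((1-p)*x) + ((1-p)*x)^2/2))|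
      ≤ (1-p) * |Real.exp (-(p*x)) - (1 + (-(p*x)) + (-(p*x))^2/2)|
        + p * |Real.exp ((1-p)*x) - (1 + ((1-p)*x) + ((1-p)*x)^2/2)| := by
        refine (abs_add_le _ _).trans ?_
        rw [abs_mul, abs_mul, abs_of_nonneg (by linarith : (0:ℝ) ≤ 1-p), abs_of_pos hp]
    _ ≤ (1-p) * (p^3 * |x|^3) + p * ((1-p)^3 * |x|^3) := by
        have := mul_le_mul_of_nonneg_left h1 (by linarith : (0:ℝ) ≤ 1-p)
        have := mul_le_mul_of_nonneg_left h2 hp.le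
        linarith
    _ ≤ |x|^3 := by
        have c1 : p^3 ≤ 1 := pow_le_one₀ hp.le hp1
        have c2 : (1-p)^3 ≤ 1 := pow_le_one₀ (by linarith) (by linarith)
        nlinarith [mul_le_mul_of_nonneg_right (mul_le_mul_of_nonneg_left c1 (by linarith : (0:ℝ) ≤ 1-p)) hm3,
          mul_le_mul_of_nonneg_right (mul_le_mul_of_nonneg_left c2 hp.le) hm3]

-- core 2
lemma core2 {d e m : ℝ} (hm0 : 0 ≤ m) (hm : m ≤ 1/2) (he0 : 0 ≤ e) (he : e ≤ m^2/8)
    (hd : |d - e| ≤ m^3) : |Real.log (1 + d) - e| ≤ 2*m^3 := by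
  rw [abs_le] at hd
  have hm2 : m^2 ≤ 1/4 := by nlinarith
  have hm3 : m^3 ≤ m^2 * (1/2) := by nlinarith
  have hm4 : m^4 ≤ m^3 * (1/2) := by nlinarith
  have hm30 : 0 ≤ m^3 := by positivity
  have hdb : |d| ≤ (5/8) * m^2 := by rw [abs_le]; constructor <;> nlinarith
  rw [abs_le] at hdb
  have hdhalf : -(1/2) ≤ d := by nlinarith
  have hlg := mylog_bound hdhalf
  have hdsq : d^2 ≤ (25/64) * m^4 := by nlinarith
  rw [abs_le] at hlg ⊢
  constructor <;> nlinarith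

-- K bound
lemma K_bound {p x : ℝ} (hp : 0 < p) (hp1 : p ≤ 1) (hx : |x| ≤ 1/2) :
    |Real.log (1-p+p*Real.exp x) - p*x - p*(1-p)*x^2/2| ≤ 2*|x|^3 := by
  have he : Real.exp x > 0 := Real.exp_pos x
  have h1 : (0:ℝ) < 1 - p + p * Real.exp x := by nlinarith
  have hphi : Real.log (1-p+p*Real.exp x) - p*x
      = Real.log ((1-p) * Real.exp (-(p*x)) + p * Real.exp ((1-p)*x)) := by
    have hid : (1-p) * Real.exp (-(p*x)) + p * Real.exp ((1-p)*x)
        = (1-p+p*Real.exp x) * Real.exp (-(p*x)) := by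
      have hee : Real.exp ((1-p)*x) = Real.exp x * Real.exp (-(p*x)) := by
        rw [← Real.exp_add]; ring_nf
      rw [hee]; ring
    rw [hid, Real.log_mul h1.ne' (Real.exp_pos _).ne', Real.log_exp]; ring
  rw [sub_sub, ← sub_sub, hphi]
  have hδ := phi_bound hp hp1 (by linarith : |x| ≤ 1)
  have hpq : p*(1-p) ≤ 1/4 := by nlinarith [sq_nonneg (2*p-1)]
  have hpq0 : 0 ≤ p*(1-p) := by nlinarith
  have hx2 : x^2 = |x|^2 := (sq_abs x).symm
  have happ := core2 (d := (1-p) * Real.exp (-(p*x)) + p * Real.exp ((1-p)*x) - 1)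
    (e := p*(1-p)*x^2/2) (m := |x|) (abs_nonneg x) hx (by positivity)
    (by rw [hx2] at *; nlinarith)
    (by rw [show (1-p) * Real.exp (-(p*x)) + p * Real.exp ((1-p)*x) - 1 - p*(1-p)*x^2/2
          = ((1-p) * Real.exp (-(p*x)) + p * Real.exp ((1-p)*x)) - (1 + p*(1-p)*x^2/2) from by ring]
        exact hδ)
  rw [show (1:ℝ) + ((1-p) * Real.exp (-(p*x)) + p * Real.exp ((1-p)*x) - 1)
      = (1-p) * Real.exp (-(p*x)) + p * Real.exp ((1-p)*x) from by ring] at happ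
  exact happ

-- odd bound
lemma odd_bound {p x : ℝ} (hp : 0 < p) (hp1 : p ≤ 1) (hx : |x| ≤ 1/2) :
    |Real.log (1-p+p*Real.exp x) - Real.log (1-p+p*Real.exp (-x)) - 2*p*x| ≤ 4*|x|^3 := by
  have h1 := K_bound hp hp1 hx
  have h2 := K_bound hp hp1 (x := -x) (by rwa [abs_neg])
  rw [abs_neg] at h2
  have key : Real.log (1-p+p*Real.exp x) - Real.log (1-p+p*Real.exp (-x)) - 2*p*x
      = (Real.log (1-p+p*Real.exp x) - p*x - p*(1-p)*x^2/2)
        - (Real.log (1-p+p*Real.exp (-x)) - p*(-x) - p*(1-p)*(-x)^2/2) := by ring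
  rw [key, sub_eq_add_neg]
  calc _ ≤ |Real.log (1-p+p*Real.exp x) - p*x - p*(1-p)*x^2/2|
        + |-(Real.log (1-p+p*Real.exp (-x)) - p*(-x) - p*(1-p)*(-x)^2/2)| := abs_add_le _ _
    _ ≤ 4*|x|^3 := by rw [abs_neg]; linarith

-- single Bernoulli integral
lemma bern_single_integral (p : ℝ) (hp : 0 < p) (hp1 : p ≤ 1) (f : Bool → ℝ) :
    ∫ b, f b ∂((PMF.bernoulli (min 1 (Real.toNNReal p)) (min_le_left _ _)).toMeasure)
      = (1 - p) * f false + p * f true := by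
  rw [PMF.integral_eq_sum]
  have hq : min 1 (Real.toNNReal p) = Real.toNNReal p :=
    min_eq_right (Real.toNNReal_le_one.mpr hp1)
  rw [Fintype.sum_bool]
  simp only [PMF.bernoulli_apply, Bool.cond_true, Bool.cond_false, hq]
  have h1p : ((1:ENNReal) - ↑(Real.toNNReal p)).toReal = 1 - p := by
    rw [ENNReal.toReal_sub_of_le (by exact_mod_cast Real.toNNReal_le_one.mpr hp1) ENNReal.one_ne_top]
    simp [hp.le]
  simp [smul_eq_mul, hp.le, h1p]; ring

-- main integral identity
lemma integral_exp_hamil (N : ℕ) (p β : ℝ) (hp : 0 < p) (hp1 : p ≤ 1) (σ : Fin N → Bool) :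
    ∫ ω, Real.exp (-β * hamil N p ω σ) ∂(bern N p)
      = ∏ c : Fin N × Fin N,
          (1 - p + p * Real.exp (β / (2 * N * p) * (spin (σ c.1) * spin (σ c.2)))) := by
  letI : MeasureSpace Bool :=
    ⟨(PMF.bernoulli (min 1 (Real.toNNReal p)) (min_le_left _ _)).toMeasure⟩
  have hsf : SigmaFinite (volume : Measure Bool) := by
    have : IsProbabilityMeasure (volume : Measure Bool) := PMF.toMeasure.isProbabilityMeasure _
    infer_instance
  have hexp : ∀ ω : Fin N × Fin N → Bool, Real.exp (-β * hamil N p ω σ)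
      = ∏ c : Fin N × Fin N,
        Real.exp (β / (2 * N * p) * ((if ω c then (1:ℝ) else 0) * (spin (σ c.1) * spin (σ c.2)))) := by
    intro ω
    rw [← Real.exp_sum]
    congr 1
    rw [hamil, Fintype.sum_prod_type]
    simp only [mul_assoc, ← Finset.mul_sum]
    ring
  have hmeas : bern N p = (volume : Measure (Fin N × Fin N → Bool)) := rfl
  rw [hmeas]
  simp_rw [hexp]
  have h := MeasureTheory.integral_fintype_prod_eq_prod (𝕜 := ℝ) (ι := Fin N × Fin N)
    (E := fun _ => Bool) (μ := fun _ => (volume : Measure Bool))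
    (f := fun c (x : Bool) => Real.exp (β / (2 * N * p) * ((if x then (1:ℝ) else 0) * (spin (σ c.1) * spin (σ c.2)))))
  rw [show (volume : Measure (Fin N × Fin N → Bool)) = Measure.pi (fun _ => (volume : Measure Bool)) from rfl]
  rw [h]
  congr 1; ext c
  rw [show (volume : Measure Bool)
      = (PMF.bernoulli (min 1 (Real.toNNReal p)) (min_le_left _ _)).toMeasure from rfl]
  rw [bern_single_integral p hp hp1]
  simp [Real.exp_zero]

lemma spin_sq_cases {N : ℕ} (σ : Fin N → Bool) (c : Fin N × Fin N) :
    spin (σ c.1) * spin (σ c.2) = 1 ∨ spin (σ c.1) * spin (σ c.2) = -1 := by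
  cases hσ1 : σ c.1 <;> cases hσ2 : σ c.2 <;> simp [spin, hσ1, hσ2]

lemma sum_log_decomp (N : ℕ) (p a : ℝ) (σ : Fin N → Bool)
    (L : ℝ → ℝ) :
    ∑ c : Fin N × Fin N, L (a * (spin (σ c.1) * spin (σ c.2)))
      = (N:ℝ)^2 * ((L a + L (-a))/2) + (mag σ)^2 * ((L a - L (-a))/2) := by
  have hpt : ∀ c : Fin N × Fin N, L (a * (spin (σ c.1) * spin (σ c.2)))
      = (L a + L (-a))/2 + (spin (σ c.1) * spin (σ c.2)) * ((L a - L (-a))/2) := by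
    intro c
    rcases spin_sq_cases σ c with h | h <;> rw [h]
    · rw [mul_one]; ring
    · rw [mul_neg_one]; ring
  simp_rw [hpt]
  rw [Finset.sum_add_distrib, Finset.sum_const, ← Finset.sum_mul]
  have hcard : (Finset.univ : Finset (Fin N × Fin N)).card = N * N := by simp
  have hsum : ∑ c : Fin N × Fin N, spin (σ c.1) * spin (σ c.2) = (mag σ)^2 := by
    rw [Fintype.sum_prod_type, mag, sq, Finset.sum_mul_sum]
  rw [hcard, hsum]
  push_cast
  ring

/-- **Remark 4.** For fixed `β > 0` and constant `p ∈ (0,1]`,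
`log 𝔼 e^{-βH(σ)} = (1-p)β²/(8p) + β|σ|²/(2N) + O(1/N²)(|σ|²/N + 1)`, uniformly in `σ`. -/
theorem log_expectation_exp_H_const_p (β p : ℝ) (hβ : 0 < β) (hp : p ∈ Set.Ioc (0 : ℝ) 1) :
    ∃ C : ℝ, ∀ᶠ N : ℕ in atTop, ∀ σ : Fin N → Bool,
      |Real.log (∫ ω, Real.exp (-β * hamil N p ω σ) ∂(bern N p))
          - (1 - p) * β ^ 2 / (8 * p) - β / (2 * N) * (mag σ) ^ 2|
        ≤ C / (N : ℝ) ^ 2 * ((mag σ) ^ 2 / N + 1) := by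
  obtain ⟨hp0, hp1⟩ := hp
  refine ⟨β^4/(16*p^4) + β^3/(4*p^3), ?_⟩
  filter_upwards [eventually_ge_atTop (⌈β/p⌉₊ + 1)] with N hN σ
  have hN1 : 1 ≤ N := le_trans (Nat.le_add_left 1 _) hN
  have hNR : (0:ℝ) < N := by exact_mod_cast hN1
  have hNbp : β/p ≤ (N:ℝ) := by
    have h1 : (β/p : ℝ) ≤ ⌈β/p⌉₊ := Nat.le_ceil _
    have h2 : ((⌈β/p⌉₊ + 1 : ℕ) : ℝ) ≤ N := by exact_mod_cast hN
    push_cast at h2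
    linarith
  set a : ℝ := β / (2 * N * p) with ha_def
  have ha_pos : 0 < a := by
    apply div_pos hβ
    positivity
  have ha_half : a ≤ 1/2 := by
    rw [ha_def, div_le_iff₀ (by positivity)]
    rw [div_le_iff₀ hp0] at hNbp
    nlinarith
  have ha_abs : |a| = a := abs_of_pos ha_pos
  rw [integral_exp_hamil N p β hp0 hp1 σ]
  have hfac : ∀ c : Fin N × Fin N,
      (0:ℝ) < 1 - p + p * Real.exp (a * (spin (σ c.1) * spin (σ c.2))) := by
    intro c
    nlinarith [Real.exp_pos (a * (spin (σ c.1) * spin (σ c.2)))]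
  have hprodform : ∀ c : Fin N × Fin N,
      β / (2 * ↑N * p) * (spin (σ c.1) * spin (σ c.2)) = a * (spin (σ c.1) * spin (σ c.2)) := by
    intro c; rw [ha_def]
  simp_rw [hprodform]
  rw [Real.log_prod (fun c _ => (hfac c).ne')]
  have hdec : ∑ c : Fin N × Fin N,
      Real.log (1 - p + p * Real.exp (a * (spin (σ c.1) * spin (σ c.2))))
      = (N:ℝ)^2 * ((Real.log (1-p+p*Real.exp a) + Real.log (1-p+p*Real.exp (-a)))/2)
        + (mag σ)^2 * ((Real.log (1-p+p*Real.exp a) - Real.log (1-p+p*Real.exp (-a)))/2) :=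
    sum_log_decomp N p a σ (fun y => Real.log (1-p+p*Real.exp y))
  rw [hdec]
  set La := Real.log (1-p+p*Real.exp a)
  set La' := Real.log (1-p+p*Real.exp (-a))
  have key1 : |La + La' - p*(1-p)*a^2| ≤ 2*a^4 := even_bound hp0 hp1 (by rw [ha_abs]; linarith)
  have key2 : |La - La' - 2*p*a| ≤ 4*a^3 := by
    have := odd_bound hp0 hp1 (x := a) (by rw [ha_abs]; linarith)
    rwa [ha_abs] at this
  have hid1 : (N:ℝ)^2 * (p*(1-p)*a^2) / 2 = (1-p) * β^2 / (8*p) := by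
    rw [ha_def]; field_simp; ring
  have hid2 : p * a = β / (2*N) := by
    rw [ha_def]; field_simp
  have hEeq : (N:ℝ)^2 * ((La + La')/2) + (mag σ)^2 * ((La - La')/2)
        - (1 - p) * β ^ 2 / (8 * p) - β / (2 * ↑N) * (mag σ)^2
      = ((N:ℝ)^2/2) * (La + La' - p*(1-p)*a^2)
        + ((mag σ)^2/2) * (La - La' - 2*p*a) := by
    rw [← hid1, ← hid2]; ring
  rw [hEeq]
  have hm0 : (0:ℝ) ≤ (mag σ)^2 := sq_nonneg _
  have habs : |((N:ℝ)^2/2) * (La + La' - p*(1-p)*a^2) + ((mag σ)^2/2) * (La - La' - 2*p*a)|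
      ≤ ((N:ℝ)^2/2) * (2*a^4) + ((mag σ)^2/2) * (4*a^3) := by
    refine (abs_add_le _ _).trans ?_
    rw [abs_mul, abs_mul, abs_of_nonneg (by positivity : (0:ℝ) ≤ (N:ℝ)^2/2),
      abs_of_nonneg (by positivity : (0:ℝ) ≤ (mag σ)^2/2)]
    have := mul_le_mul_of_nonneg_left key1 (by positivity : (0:ℝ) ≤ (N:ℝ)^2/2)
    have := mul_le_mul_of_nonneg_left key2 (by positivity : (0:ℝ) ≤ (mag σ)^2/2)
    linarith
  refine habs.trans ?_
  have e1 : ((N:ℝ)^2/2) * (2*a^4) = (β^4/(16*p^4)) / (N:ℝ)^2 := by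
    rw [ha_def]; field_simp; ring
  have e2 : ((mag σ)^2/2) * (4*a^3) = (β^3/(4*p^3)) * ((mag σ)^2 / (N:ℝ)^3) := by
    rw [ha_def]; field_simp; ring
  rw [e1, e2]
  have hC1 : (0:ℝ) < β^4/(16*p^4) := by positivity
  have hC2 : (0:ℝ) < β^3/(4*p^3) := by positivity
  have hfin : (β^4/(16*p^4) + β^3/(4*p^3)) / (N:ℝ)^2 * ((mag σ)^2 / N + 1)
      = (β^4/(16*p^4) + β^3/(4*p^3)) * ((mag σ)^2 / (N:ℝ)^3)
        + (β^4/(16*p^4) + β^3/(4*p^3)) / (N:ℝ)^2 := by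
    field_simp
  rw [hfin]
  have hmN : (0:ℝ) ≤ (mag σ)^2 / (N:ℝ)^3 := by positivity
  have hN2 : (0:ℝ) < 1/(N:ℝ)^2 := by positivity
  have t1 : (β^4/(16*p^4)) / (N:ℝ)^2 ≤ (β^4/(16*p^4) + β^3/(4*p^3)) / (N:ℝ)^2 := by
    apply div_le_div_of_nonneg_right ?_ (by positivity)
    linarith
  have t2 : (β^3/(4*p^3)) * ((mag σ)^2 / (N:ℝ)^3)
      ≤ (β^4/(16*p^4) + β^3/(4*p^3)) * ((mag σ)^2 / (N:ℝ)^3) :=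
    mul_le_mul_of_nonneg_right (by linarith) hmN
  linarith
end
end

section
/- Let β > 0 be fixed and let p = p(N) ∈ (0,1] be a sequence with p(N)·N → ∞. Then there exists a constant C > 0 such that for all sufficiently large N and all σ, τ ∈ {-1,+1}^N, | log E[e^{-βH(σ)} e^{-βH(τ)}] - (β/2)·(|σ|² + |τ|²)/N - ( (N²p/2)(cosh(β/(Np)) - 1) - β²/4 )·(1 + |στ|²/N²) | ≤ (C/(N²p²)) · ( (|σ|² + |τ|²)/N + 1 + |στ|²/N² ), where |σ| = Σ_{i=1}^N σ_i and |στ| = Σ_{i=1}^N σ_i τ_i. -/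
open MeasureTheory ProbabilityTheory Filter
open scoped Classical

noncomputable section

/-! ### Auxiliary material for Lemma 5 -/

section Aux

private lemma expT2 {x : ℝ} (hx : |x| ≤ 1) : |Real.exp x - (1 + x)| ≤ (3/4)*x^2 := by
  have h := Real.exp_bound hx (n := 2) (by norm_num)
  calc |Real.exp x - (1+x)| = |Real.exp x - ∑ m ∈ Finset.range 2, x ^ m / m.factorial| := by
        norm_num [Finset.sum_range_succ, Nat.factorial]
    _ ≤ |x|^2 * (Nat.succ 2/(Nat.factorial 2 * 2)) := h
    _ = (3/4)*x^2 := by rw [sq_abs]; norm_num [Nat.factorial]; ring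

private lemma expT3 {x : ℝ} (hx : |x| ≤ 1) : |Real.exp x - (1 + x + x^2/2)| ≤ (2/9)*|x|^3 := by
  have h := Real.exp_bound hx (n := 3) (by norm_num)
  calc |Real.exp x - (1 + x + x^2/2)| = |Real.exp x - ∑ m ∈ Finset.range 3, x ^ m / m.factorial| := by
        norm_num [Finset.sum_range_succ, Nat.factorial]
    _ ≤ |x|^3 * (Nat.succ 3/(Nat.factorial 3 * 3)) := h
    _ = (2/9)*|x|^3 := by norm_num [Nat.factorial]; ring

private lemma expT4 {x : ℝ} (hx : |x| ≤ 1) : |Real.exp x - (1 + x + x^2/2 + x^3/6)| ≤ (5/96)*x^4 := by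
  have h := Real.exp_bound hx (n := 4) (by norm_num)
  calc |Real.exp x - (1 + x + x^2/2 + x^3/6)|
      = |Real.exp x - ∑ m ∈ Finset.range 4, x ^ m / m.factorial| := by
        norm_num [Finset.sum_range_succ, Nat.factorial]
    _ ≤ |x|^4 * (Nat.succ 4/(Nat.factorial 4 * 4)) := h
    _ = (5/96)*x^4 := by
        rw [show |x|^4 = x^4 by rw [← abs_pow, abs_of_nonneg (by positivity)]]
        norm_num [Nat.factorial]; ring

private lemma logB {u : ℝ} (hu : |u| ≤ 1/2) :
    |Real.log (1+u) - u| ≤ 2*u^2 ∧ |Real.log (1+u) - u + u^2/2| ≤ 2*|u|^3 := by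
  have h1 : |(-u)| < 1 := by rw [abs_neg]; linarith
  have e : 1 - (-u) = 1 + u := by ring
  have h2 := Real.abs_log_sub_add_sum_range_le h1 1
  have h3 := Real.abs_log_sub_add_sum_range_le h1 2
  rw [e] at h2 h3
  simp only [Finset.sum_range_succ, Finset.sum_range_zero, abs_neg] at h2 h3
  norm_num at h2 h3
  rw [show -u + Real.log (1+u) = Real.log (1+u) - u from by ring] at h2
  rw [show -u + u^2/2 + Real.log (1+u) = Real.log (1+u) - u + u^2/2 from by ring] at h3
  constructor
  · refine h2.trans ?_
    rw [div_le_iff₀ (by linarith)]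
    nlinarith [abs_nonneg u, sq_abs u, sq_nonneg u]
  · refine h3.trans ?_
    rw [div_le_iff₀ (by linarith)]
    nlinarith [abs_nonneg u, pow_nonneg (abs_nonneg u) 3]

set_option maxHeartbeats 1000000 in
private lemma estD {p x : ℝ} (hp0 : 0 < p) (hp1 : p ≤ 1) (hx0 : 0 < x) (hx : x ≤ 1/4) :
    |(Real.log (1 - p + p*Real.exp x) - Real.log (1 - p + p*Real.exp (-x))) - 2*p*x|
      ≤ 9*p*x^3 := by
  have hx1 : |x| ≤ 1 := by rw [abs_of_pos hx0]; linarith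
  have hx1' : |(-x)| ≤ 1 := by rwa [abs_neg]
  have t2p := abs_le.1 (expT2 hx1)
  have t2m := abs_le.1 (expT2 hx1')
  have t3p := expT3 hx1
  have t3m := expT3 hx1'
  rw [abs_of_pos hx0] at t3p
  rw [abs_neg, abs_of_pos hx0] at t3m
  replace t3p := abs_le.1 t3p
  replace t3m := abs_le.1 t3m
  have hpx : p*x ≤ x := by nlinarith
  have hxx4 : x^2 ≤ x/4 := by nlinarith
  have hp2 : p^2 ≤ p := by nlinarith
  have hp3 : p^3 ≤ p := by nlinarith [sq_nonneg p, mul_le_mul_of_nonneg_right hp2 hp0.le]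
  have hx3 : (0:ℝ) ≤ x^3 := by positivity
  have hpx3 : (0:ℝ) ≤ p*x^3 := by positivity
  have hp3x : p^3*x^3 ≤ p*x^3 := mul_le_mul_of_nonneg_right hp3 hx3
  have hp2x : p^2*x^3 ≤ p*x^3 := mul_le_mul_of_nonneg_right hp2 hx3
  have hA1 : Real.exp x - 1 ≤ (5/4)*x := by linarith [t2p.2]
  have hA2 : 0 ≤ Real.exp x - 1 := by linarith [Real.add_one_le_exp x]
  have hB1 : -x ≤ Real.exp (-x) - 1 := by linarith [Real.add_one_le_exp (-x)]
  have hB2 : Real.exp (-x) - 1 ≤ 0 := by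
    have := Real.exp_lt_one_iff.mpr (neg_neg_iff_pos.mpr hx0)
    linarith
  set up : ℝ := p*(Real.exp x - 1) with hup
  set um : ℝ := p*(Real.exp (-x) - 1) with hum
  have e1 : 1 - p + p*Real.exp x = 1 + up := by rw [hup]; ring
  have e2 : 1 - p + p*Real.exp (-x) = 1 + um := by rw [hum]; ring
  have hupb : |up| ≤ (5/4)*(p*x) := by
    rw [hup, abs_mul, abs_of_pos hp0, abs_of_nonneg hA2]
    have := mul_le_mul_of_nonneg_left hA1 hp0.le
    linarith
  have humb : |um| ≤ p*x := by
    rw [hum, abs_mul, abs_of_pos hp0, abs_of_nonpos hB2]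
    have := mul_le_mul_of_nonneg_left (show -(Real.exp (-x) - 1) ≤ x by linarith) hp0.le
    linarith
  have hup2 : |up| ≤ 1/2 := by linarith
  have hum2 : |um| ≤ 1/2 := by linarith
  have lp := (logB hup2).2
  have lm := (logB hum2).2
  have hlp : |Real.log (1+up) - up + up^2/2| ≤ 4*(p*x^3) := by
    refine lp.trans ?_
    have h3 : |up|^3 ≤ ((5/4)*(p*x))^3 := pow_le_pow_left₀ (abs_nonneg _) hupb 3
    rw [show ((5/4)*(p*x))^3 = (125/64)*(p^3*x^3) from by ring] at h3
    linarith
  have hlm : |Real.log (1+um) - um + um^2/2| ≤ 2*(p*x^3) := by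
    refine lm.trans ?_
    have h3 : |um|^3 ≤ (p*x)^3 := pow_le_pow_left₀ (abs_nonneg _) humb 3
    rw [show (p*x)^3 = p^3*x^3 from by ring] at h3
    linarith
  have hmid : |up^2 - um^2| ≤ 4*(p*x^3) := by
    have hfac : up^2 - um^2 = p^2*(((Real.exp x - 1) - (Real.exp (-x) - 1))*((Real.exp x - 1) + (Real.exp (-x) - 1))) := by
      rw [hup, hum]; ring
    have h1 : (0:ℝ) ≤ (Real.exp x - 1) - (Real.exp (-x) - 1) := by linarith
    have h2 : (0:ℝ) ≤ (Real.exp x - 1) + (Real.exp (-x) - 1) := by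
      linarith [Real.add_one_le_exp x, Real.add_one_le_exp (-x)]
    have hd : (Real.exp x - 1) - (Real.exp (-x) - 1) ≤ (9/4)*x := by linarith
    have hs : (Real.exp x - 1) + (Real.exp (-x) - 1) ≤ (3/2)*x^2 := by
      linarith [t2p.2, t2m.2]
    rw [hfac, abs_mul, abs_of_nonneg (sq_nonneg p), abs_mul, abs_of_nonneg h1, abs_of_nonneg h2]
    have hprod : ((Real.exp x - 1) - (Real.exp (-x) - 1))*((Real.exp x - 1) + (Real.exp (-x) - 1))
        ≤ ((9/4)*x)*((3/2)*x^2) :=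
      mul_le_mul hd hs h2 (by positivity)
    have := mul_le_mul_of_nonneg_left hprod (sq_nonneg p)
    have heq : p^2*(((9/4)*x)*((3/2)*x^2)) = (27/8)*(p^2*x^3) := by ring
    linarith
  have htail : |up - um - 2*(p*x)| ≤ (1/2)*(p*x^3) := by
    have hid : up - um - 2*(p*x) = p*((Real.exp x - (1 + x + x^2/2)) - (Real.exp (-x) - (1 + (-x) + (-x)^2/2))) := by
      rw [hup, hum]; ring
    rw [hid, abs_mul, abs_of_pos hp0]
    have hq : |(Real.exp x - (1 + x + x^2/2)) - (Real.exp (-x) - (1 + (-x) + (-x)^2/2))| ≤ (4/9)*x^3 := by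
      rw [abs_le]; constructor <;> linarith [t3p.1, t3p.2, t3m.1, t3m.2]
    have := mul_le_mul_of_nonneg_left hq hp0.le
    have heq : p*((4/9)*x^3) = (4/9)*(p*x^3) := by ring
    linarith
  rw [e1, e2]
  have key : (Real.log (1+up) - Real.log (1+um)) - 2*p*x
      = (Real.log (1+up) - up + up^2/2) - (Real.log (1+um) - um + um^2/2)
        - (up^2 - um^2)/2 + (up - um - 2*(p*x)) := by ring
  rw [key, abs_le]
  have a1 := abs_le.1 hlp
  have a2 := abs_le.1 hlm
  have a3 := abs_le.1 hmid
  have a4 := abs_le.1 htail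
  constructor <;> [linarith [a1.1, a2.2, a3.2, a4.1]; linarith [a1.2, a2.1, a3.1, a4.2]]

set_option maxHeartbeats 1000000 in
private lemma estS {p x : ℝ} (hp0 : 0 < p) (hp1 : p ≤ 1) (hx0 : 0 < x) (hx : x ≤ 1/4) :
    |Real.log (1 + 2*p*(1-p)*(Real.cosh x - 1)) - (2*p*(Real.cosh x - 1) - p^2*x^2)|
      ≤ 6*p^2*x^4 := by
  have hx1 : |x| ≤ 1 := by rw [abs_of_pos hx0]; linarith
  have hx1' : |(-x)| ≤ 1 := by rwa [abs_neg]
  have t2p := abs_le.1 (expT2 hx1)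
  have t2m := abs_le.1 (expT2 hx1')
  have t4p := abs_le.1 (expT4 hx1)
  have t4m := abs_le.1 (expT4 hx1')
  have hch := Real.cosh_eq x
  have hC0 : 0 ≤ Real.cosh x - 1 := by linarith [Real.one_le_cosh x]
  have hC1 : Real.cosh x - 1 ≤ (3/4)*x^2 := by
    rw [hch]; linarith [t2p.2, t2m.2]
  have hC4 : |Real.cosh x - 1 - x^2/2| ≤ (5/96)*x^4 := by
    rw [hch, abs_le]; constructor <;> linarith [t4p.1, t4p.2, t4m.1, t4m.2]
  set u : ℝ := 2*p*(1-p)*(Real.cosh x - 1) with hu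
  have hu0 : 0 ≤ u := by
    rw [hu]; have : 0 ≤ 1 - p := by linarith
    positivity
  have hub : u ≤ (3/2)*(p*x^2) := by
    rw [hu]
    nlinarith [mul_nonneg hp0.le hC0, mul_le_mul_of_nonneg_left hC1 (by positivity : (0:ℝ) ≤ 2*p)]
  have hu2 : |u| ≤ 1/2 := by
    rw [abs_of_nonneg hu0]
    nlinarith [mul_pos hp0 (mul_pos hx0 hx0)]
  have hlog := (logB hu2).1
  have hu2b : u^2 ≤ (9/4)*(p^2*x^4) := by nlinarith [hu0, hub]
  have key : Real.log (1+u) - (2*p*(Real.cosh x - 1) - p^2*x^2)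
      = (Real.log (1+u) - u) - 2*p^2*(Real.cosh x - 1 - x^2/2) := by rw [hu]; ring
  rw [key, abs_le]
  have a1 := abs_le.1 hlog
  have a2 := abs_le.1 hC4
  have a2' := mul_le_mul_of_nonneg_left a2.2 (by positivity : (0:ℝ) ≤ 2*p^2)
  have a2'' := mul_le_mul_of_nonneg_left (neg_le_neg a2.1) (by positivity : (0:ℝ) ≤ 2*p^2)
  constructor <;> nlinarith [a1.1, a1.2, a2', a2'', hu2b, sq_nonneg p, sq_nonneg x]

private lemma bern_singleton {N : ℕ} {p : ℝ} (hp0 : 0 ≤ p) (hp1 : p ≤ 1)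
    (ω : Fin N × Fin N → Bool) :
    (bern N p {ω}).toReal = ∏ q : Fin N × Fin N, (if ω q then p else 1 - p) := by
  have hmin : min 1 (Real.toNNReal p) = Real.toNNReal p :=
    min_eq_right (Real.toNNReal_le_one.mpr hp1)
  rw [show ({ω} : Set (Fin N × Fin N → Bool)) = Set.pi Set.univ (fun q => {ω q}) from
    (Set.univ_pi_singleton ω).symm]
  rw [bern, Measure.pi_pi, ENNReal.toReal_prod]
  refine Finset.prod_congr rfl fun q _ => ?_
  rw [PMF.toMeasure_apply_singleton _ _ (measurableSet_singleton _), PMF.bernoulli_apply, hmin]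
  cases ω q
  · simp only [Bool.cond_false]
    rw [ENNReal.coe_toReal, NNReal.coe_sub (Real.toNNReal_le_one.mpr hp1)]
    simp [hp0]
  · simp [hp0]

private lemma integral_prod_bool {N : ℕ} {p : ℝ} (hp0 : 0 ≤ p) (hp1 : p ≤ 1)
    (g : Fin N × Fin N → Bool → ℝ) :
    ∫ ω, (∏ q, g q (ω q)) ∂(bern N p)
      = ∏ q : Fin N × Fin N, ((1 - p) * g q false + p * g q true) := by
  haveI : IsProbabilityMeasure (bern N p) := by
    unfold bern; infer_instance
  rw [integral_fintype (Integrable.of_finite)]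
  have : ∀ ω : Fin N × Fin N → Bool,
      (bern N p).real {ω} • (∏ q, g q (ω q))
        = ∏ q : Fin N × Fin N, ((if ω q then p else 1 - p) * g q (ω q)) := by
    intro ω
    rw [measureReal_def, bern_singleton hp0 hp1, smul_eq_mul, ← Finset.prod_mul_distrib]
  rw [Finset.sum_congr rfl fun ω _ => this ω]
  rw [← Fintype.piFinset_univ, Finset.sum_prod_piFinset Finset.univ
    (fun q b => (if b = true then p else 1 - p) * g q b)]
  refine Finset.prod_congr rfl fun q _ => ?_
  simp [Fintype.sum_bool]
  ring

private lemma integrand_eq {N : ℕ} (p β : ℝ) (σ τ : Fin N → Bool) (ω : Fin N × Fin N → Bool) :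
    Real.exp (-β * hamil N p ω σ) * Real.exp (-β * hamil N p ω τ)
      = ∏ q : Fin N × Fin N, Real.exp ((β/(2*N*p)) * (if ω q then (1:ℝ) else 0) *
          (spin (σ q.1) * spin (σ q.2) + spin (τ q.1) * spin (τ q.2))) := by
  have hH : ∀ ρ : Fin N → Bool, -β * hamil N p ω ρ
      = ∑ q : Fin N × Fin N, (β/(2*(N:ℝ)*p)) * (if ω q then (1:ℝ) else 0) *
          (spin (ρ q.1) * spin (ρ q.2)) := by
    intro ρ
    rw [hamil, Fintype.sum_prod_type]
    rw [show -β * (-(1 / (2 * (N:ℝ) * p)) * ∑ i : Fin N, ∑ j : Fin N,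
        (if ω (i, j) then (1 : ℝ) else 0) * spin (ρ i) * spin (ρ j))
      = (β/(2*(N:ℝ)*p)) * ∑ i : Fin N, ∑ j : Fin N,
        (if ω (i, j) then (1 : ℝ) else 0) * spin (ρ i) * spin (ρ j) from by ring]
    rw [Finset.mul_sum]
    refine Finset.sum_congr rfl fun i _ => ?_
    rw [Finset.mul_sum]
    refine Finset.sum_congr rfl fun j _ => ?_
    ring
  rw [← Real.exp_add, hH σ, hH τ, ← Finset.sum_add_distrib, Real.exp_sum]
  refine Finset.prod_congr rfl fun q _ => ?_
  congr 1
  ring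

private lemma spin_sq (b : Bool) : spin b ^ 2 = 1 := by cases b <;> simp [spin]

private lemma spin_pm (b b' : Bool) : spin b * spin b' = 1 ∨ spin b * spin b' = -1 := by
  cases b <;> cases b' <;> simp [spin]

private lemma factor_pos {p : ℝ} (hp0 : 0 < p) (hp1 : p ≤ 1) (z : ℝ) :
    0 < 1 - p + p * Real.exp z := by nlinarith [Real.exp_pos z, mul_pos hp0 (Real.exp_pos z)]

private lemma log_factor_eq {p : ℝ} (c : ℝ) {s t : ℝ}
    (hs : s = 1 ∨ s = -1) (ht : t = 1 ∨ t = -1) :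
    Real.log (1 - p + p * Real.exp (c * (s + t)))
      = (s+t)^2/8 * (Real.log (1 - p + p * Real.exp (2*c))
          + Real.log (1 - p + p * Real.exp (-(2*c))))
        + (s+t)/4 * (Real.log (1 - p + p * Real.exp (2*c))
          - Real.log (1 - p + p * Real.exp (-(2*c)))) := by
  rcases hs with h|h <;> rcases ht with h'|h' <;> subst h h'
  · rw [show c * ((1:ℝ) + 1) = 2*c from by ring]; ring
  · rw [show c * ((1:ℝ) + -1) = 0 from by ring]
    simp [Real.exp_zero]
  · rw [show c * ((-1:ℝ) + 1) = 0 from by ring]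
    simp [Real.exp_zero]
  · rw [show c * ((-1:ℝ) + -1) = -(2*c) from by ring]; ring

private lemma sum_spin_prod {N : ℕ} (f g : Fin N → ℝ) :
    ∑ q : Fin N × Fin N, f q.1 * g q.2 = (∑ i, f i) * (∑ j, g j) := by
  rw [Finset.sum_mul_sum]
  exact Fintype.sum_prod_type _

private lemma logE_eq {N : ℕ} {p β : ℝ} (hp0 : 0 < p) (hp1 : p ≤ 1)
    (σ τ : Fin N → Bool) :
    Real.log (∫ ω, Real.exp (-β * hamil N p ω σ) * Real.exp (-β * hamil N p ω τ) ∂(bern N p))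
      = ((N:ℝ)^2 + (magPair σ τ)^2)/4
          * (Real.log (1 - p + p*Real.exp (2*(β/(2*N*p))))
            + Real.log (1 - p + p*Real.exp (-(2*(β/(2*N*p))))))
        + ((mag σ)^2 + (mag τ)^2)/4
          * (Real.log (1 - p + p*Real.exp (2*(β/(2*N*p))))
            - Real.log (1 - p + p*Real.exp (-(2*(β/(2*N*p)))))) := by
  set c : ℝ := β/(2*N*p) with hc
  simp only [integrand_eq p β σ τ]
  rw [integral_prod_bool hp0.le hp1
    (fun q b => Real.exp (c * (if b then (1:ℝ) else 0) *
      (spin (σ q.1) * spin (σ q.2) + spin (τ q.1) * spin (τ q.2))))]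
  have hfac : ∀ q : Fin N × Fin N,
      (1 - p) * Real.exp (c * (if false then (1:ℝ) else 0) *
        (spin (σ q.1) * spin (σ q.2) + spin (τ q.1) * spin (τ q.2)))
      + p * Real.exp (c * (if true then (1:ℝ) else 0) *
        (spin (σ q.1) * spin (σ q.2) + spin (τ q.1) * spin (τ q.2)))
      = 1 - p + p * Real.exp (c * (spin (σ q.1) * spin (σ q.2) + spin (τ q.1) * spin (τ q.2))) := by
    intro q
    simp [Real.exp_zero]
  rw [Finset.prod_congr rfl fun q _ => hfac q]
  rw [Real.log_prod (fun q _ => (factor_pos hp0 hp1 _).ne')]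
  rw [Finset.sum_congr rfl fun q _ =>
    log_factor_eq c (spin_pm (σ q.1) (σ q.2)) (spin_pm (τ q.1) (τ q.2))]
  rw [Finset.sum_add_distrib, ← Finset.sum_mul, ← Finset.sum_mul, ← Finset.sum_div,
    ← Finset.sum_div]
  have hB : ∑ q : Fin N × Fin N,
      (spin (σ q.1) * spin (σ q.2) + spin (τ q.1) * spin (τ q.2))
      = (mag σ)^2 + (mag τ)^2 := by
    rw [Finset.sum_add_distrib, sum_spin_prod (fun i => spin (σ i)) (fun i => spin (σ i)),
      sum_spin_prod (fun i => spin (τ i)) (fun i => spin (τ i)), mag, mag, sq, sq]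
  have hA : ∑ q : Fin N × Fin N,
      (spin (σ q.1) * spin (σ q.2) + spin (τ q.1) * spin (τ q.2))^2
      = 2*(N:ℝ)^2 + 2*(magPair σ τ)^2 := by
    have hstep : ∀ q : Fin N × Fin N,
        (spin (σ q.1) * spin (σ q.2) + spin (τ q.1) * spin (τ q.2))^2
        = 2 + 2*((spin (σ q.1) * spin (τ q.1)) * (spin (σ q.2) * spin (τ q.2))) := by
      intro q
      linear_combination (spin (σ q.2))^2 * spin_sq (σ q.1) + spin_sq (σ q.2)
        + (spin (τ q.2))^2 * spin_sq (τ q.1) + spin_sq (τ q.2)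
    rw [Finset.sum_congr rfl fun q _ => hstep q, Finset.sum_add_distrib, ← Finset.mul_sum,
      sum_spin_prod (fun i => spin (σ i) * spin (τ i)) (fun i => spin (σ i) * spin (τ i)),
      Finset.sum_const, Finset.card_univ]
    rw [magPair, sq]
    simp [Fintype.card_prod, nsmul_eq_mul]
    ring
  rw [hA, hB]
  ring

set_option maxHeartbeats 2000000 in
private lemma final_ineq {β pp x n ch Ms q2 Lp Lm : ℝ}
    (hp0 : 0 < pp) (hn : 1 ≤ n) (hx0 : 0 < x)
    (hMs : 0 ≤ Ms) (hq2 : 0 ≤ q2) (hβ : 0 < β)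
    (hβeq : β = x*(n*pp))
    (hD : |(Lp - Lm) - 2*pp*x| ≤ 9*pp*x^3)
    (hS : |(Lp + Lm) - (2*pp*(ch - 1) - pp^2*x^2)| ≤ 6*pp^2*x^4) :
    |(n^2 + q2)/4 * (Lp + Lm) + Ms/4 * (Lp - Lm)
        - β/2 * (Ms/n) - (n^2*pp/2*(ch - 1) - β^2/4) * (1 + q2/n^2)|
      ≤ (3*β^3 + 2*β^4 + 1)/(n^2*pp^2) * (Ms/n + 1 + q2/n^2) := by
  have hn0 : (0:ℝ) < n := by linarith
  set E1 := (Lp - Lm) - 2*pp*x with hE1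
  set E2 := (Lp + Lm) - (2*pp*(ch - 1) - pp^2*x^2) with hE2
  have key : (n^2 + q2)/4 * (Lp + Lm) + Ms/4 * (Lp - Lm)
      - β/2 * (Ms/n) - (n^2*pp/2*(ch - 1) - β^2/4) * (1 + q2/n^2)
      = Ms/4*E1 + ((1 + q2/n^2)*(n^2/4))*E2 := by
    rw [hE1, hE2, hβeq]; field_simp; ring
  rw [key]
  have b1 : |Ms/4*E1| ≤ Ms/4*(9*pp*x^3) := by
    rw [abs_mul, abs_of_nonneg (by positivity : (0:ℝ) ≤ Ms/4)]
    exact mul_le_mul_of_nonneg_left hD (by positivity)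
  have b2 : |((1 + q2/n^2)*(n^2/4))*E2| ≤ ((1 + q2/n^2)*(n^2/4))*(6*pp^2*x^4) := by
    rw [abs_mul, abs_of_nonneg (by positivity : (0:ℝ) ≤ (1 + q2/n^2)*(n^2/4))]
    exact mul_le_mul_of_nonneg_left hS (by positivity)
  have i1 : Ms/4*(9*pp*x^3) = (9*β^3/4)/(n^2*pp^2)*(Ms/n) := by
    rw [hβeq]; field_simp
  have i2 : ((1 + q2/n^2)*(n^2/4))*(6*pp^2*x^4) = (3*β^4/2)/(n^2*pp^2)*(1 + q2/n^2) := by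
    rw [hβeq]; field_simp; ring
  have hu : 0 ≤ Ms/n := by positivity
  have hv : (0:ℝ) ≤ 1 + q2/n^2 := by positivity
  have c1 : 9*β^3/4 ≤ 3*β^3 + 2*β^4 + 1 := by nlinarith [pow_pos hβ 3, pow_pos hβ 4]
  have c2 : 3*β^4/2 ≤ 3*β^3 + 2*β^4 + 1 := by nlinarith [pow_pos hβ 3, pow_pos hβ 4]
  calc |Ms/4*E1 + ((1 + q2/n^2)*(n^2/4))*E2|
      ≤ Ms/4*(9*pp*x^3) + ((1 + q2/n^2)*(n^2/4))*(6*pp^2*x^4) :=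
        (abs_add_le _ _).trans (by linarith)
    _ = ((9*β^3/4)*(Ms/n) + (3*β^4/2)*(1 + q2/n^2))/(n^2*pp^2) := by
        rw [i1, i2]; ring
    _ ≤ ((3*β^3 + 2*β^4 + 1)*(Ms/n + 1 + q2/n^2))/(n^2*pp^2) := by
        gcongr (?_ : ℝ)/(n^2*pp^2)
        nlinarith [mul_nonneg (by linarith : (0:ℝ) ≤ 3*β^3 + 2*β^4 + 1 - 9*β^3/4) hu,
            mul_nonneg (by linarith : (0:ℝ) ≤ 3*β^3 + 2*β^4 + 1 - 3*β^4/2) hv]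
    _ = (3*β^3 + 2*β^4 + 1)/(n^2*pp^2) * (Ms/n + 1 + q2/n^2) := by ring

end Aux

/-- **Lemma 5.** For fixed `β > 0` and `p = p(N)` with `pN → ∞`, there is `C > 0` such that
for all large `N` and all `σ, τ ∈ {-1,+1}^N`,
`|log 𝔼[e^{-βH(σ)}e^{-βH(τ)}] - (β/2)(|σ|²+|τ|²)/N - ((N²p/2)(cosh(β/(Np)) - 1) - β²/4)(1 + |στ|²/N²)|
  ≤ C/(N²p²) · ((|σ|²+|τ|²)/N + 1 + |στ|²/N²)`. -/
theorem log_expectation_exp_H_pair (β : ℝ) (hβ : 0 < β)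
    (p : ℕ → ℝ) (hp : ∀ N, p N ∈ Set.Ioc (0 : ℝ) 1)
    (hpN : Tendsto (fun N : ℕ => p N * (N : ℝ)) atTop atTop) :
    ∃ C > (0 : ℝ), ∀ᶠ N : ℕ in atTop, ∀ σ τ : Fin N → Bool,
      |Real.log (∫ ω, Real.exp (-β * hamil N (p N) ω σ) *
            Real.exp (-β * hamil N (p N) ω τ) ∂(bern N (p N)))
          - β / 2 * (((mag σ) ^ 2 + (mag τ) ^ 2) / N)
          - ((N : ℝ) ^ 2 * p N / 2 * (Real.cosh (β / (N * p N)) - 1) - β ^ 2 / 4) *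
              (1 + (magPair σ τ) ^ 2 / (N : ℝ) ^ 2)|
        ≤ C / ((N : ℝ) ^ 2 * (p N) ^ 2) *
            (((mag σ) ^ 2 + (mag τ) ^ 2) / N + 1 + (magPair σ τ) ^ 2 / (N : ℝ) ^ 2) := by
  refine ⟨3*β^3 + 2*β^4 + 1, by nlinarith [pow_pos hβ 3, pow_pos hβ 4], ?_⟩
  filter_upwards [hpN.eventually_ge_atTop (max (4*β) 1)] with N hN σ τ
  obtain ⟨hp0, hp1⟩ := hp N
  have hp4 : 4*β ≤ p N * N := le_trans (le_max_left _ _) hN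
  have h1N : (1:ℝ) ≤ p N * N := le_trans (le_max_right _ _) hN
  have hNc : (0:ℝ) ≤ (N:ℝ) := Nat.cast_nonneg N
  have hN1 : (1:ℝ) ≤ (N:ℝ) := by nlinarith [mul_le_mul_of_nonneg_right hp1 hNc]
  have hN0 : (0:ℝ) < (N:ℝ) := by linarith
  have hNp0 : (0:ℝ) < (N:ℝ) * p N := mul_pos hN0 hp0
  set x : ℝ := β / ((N:ℝ) * p N) with hxdef
  have hx0 : 0 < x := div_pos hβ hNp0
  have hx4 : x ≤ 1/4 := by
    rw [hxdef, div_le_iff₀ hNp0]; nlinarith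
  have h2c : 2*(β/(2*(N:ℝ)*p N)) = x := by
    rw [hxdef]; field_simp
  have hβeq : β = x * ((N:ℝ) * p N) := by
    rw [hxdef]; field_simp
  rw [logE_eq hp0 hp1 σ τ, h2c]
  have hE : Real.exp x * Real.exp (-x) = 1 := by
    rw [← Real.exp_add]; simp
  have hSeq : Real.log (1 - p N + p N * Real.exp x) + Real.log (1 - p N + p N * Real.exp (-x))
      = Real.log (1 + 2*(p N)*(1 - p N)*(Real.cosh x - 1)) := by
    rw [← Real.log_mul (factor_pos hp0 hp1 x).ne' (factor_pos hp0 hp1 (-x)).ne']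
    congr 1
    rw [Real.cosh_eq]
    linear_combination (p N)^2 * hE
  have hD := estD hp0 hp1 hx0 hx4
  have hS2 : |(Real.log (1 - p N + p N * Real.exp x) + Real.log (1 - p N + p N * Real.exp (-x)))
      - (2*(p N)*(Real.cosh x - 1) - (p N)^2*x^2)| ≤ 6*(p N)^2*x^4 := by
    rw [hSeq]
    exact estS hp0 hp1 hx0 hx4
  exact final_ineq hp0 hN1 hx0 (by positivity) (by positivity) hβ hβeq hD hS2
end
end
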